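/- Let (G,m) be a summable weighted graph and let f ∈ L²(G,m) be a nonzero function. Define h(f) as the infimum of the Cheeger ratios h(S) = m(∂S)/m(S) over all nonempty subsets S of the support {v ∈ V : f(v) ≠ 0}. Then the Rayleigh quotient of f satisfies 1 − √(1 − h(f)²) ≤ ⟨Δf,f⟩/⟨f,f⟩ ≤ 1 + √(1 − h(f)²). (Here h(f) ∈ [0,1], so the square root is real.) -/

import Mathlib

open MeasureTheory
open scoped ENNReal NNReal

/-- A summable weighted graph on a vertex set `V`. -/
structure SummableWeightedGraph (V : Type*) where
  m : V → V → ℝ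
  symm : ∀ u v, m u v = m v u
  nonneg : ∀ u v, 0 ≤ m u v
  loopless : ∀ v, m v v = 0
  summable : Summable fun p : V × V => m p.1 p.2
  noIsolated : ∀ v, 0 < ∑' u, m v u

namespace SummableWeightedGraph

variable {V : Type*} (G : SummableWeightedGraph V)

/-- The weight of a vertex. -/
noncomputable def deg (v : V) : ℝ := ∑' u, G.m v u

/-- The weight of a set of vertices. -/
noncomputable def setWeight (S : Set V) : ℝ := ∑' v : S, G.deg v

/-- The weight of the boundary of a set of vertices. -/
noncomputable def boundaryWeight (S : Set V) : ℝ :=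
  ∑' p : ↥S × ↥Sᶜ, G.m p.1 p.2

/-- The Cheeger constant. -/
noncomputable def cheegerConst : ℝ :=
  sInf { r : ℝ | ∃ S : Set V, S.Nonempty ∧ G.setWeight S ≤ G.setWeight Sᶜ ∧
    r = G.boundaryWeight S / G.setWeight S }

/-- The weighted counting measure on vertices. -/
noncomputable def measure [MeasurableSpace V] : Measure V :=
  Measure.sum fun v => ENNReal.ofReal (G.deg v) • Measure.dirac v

/-- The normalised Laplacian, characterised by its pointwise formula. -/
def IsLaplacian [MeasurableSpace V]
    (L : Lp ℝ 2 G.measure →L[ℝ] Lp ℝ 2 G.measure) : Prop :=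
  ∀ f : Lp ℝ 2 G.measure, ∀ᵐ v ∂G.measure,
    L f v = f v - (G.deg v)⁻¹ * ∑' u, G.m v u * f u

end SummableWeightedGraph


set_option linter.unusedSectionVars false
set_option linter.unusedVariables false
set_option maxHeartbeats 1000000

namespace SummableWeightedGraph
variable {V : Type*} (G : SummableWeightedGraph V)

lemma deg_pos (v : V) : 0 < G.deg v := G.noIsolated v
lemma deg_nonneg (v : V) : 0 ≤ G.deg v := (G.deg_pos v).le
lemma summable_left (v : V) : Summable (G.m v) := by
  have := G.summable.prod_factor v; exact this
lemma summable_deg : Summable G.deg :=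
  ((summable_prod_of_nonneg (fun p => G.nonneg p.1 p.2)).mp G.summable).2

lemma swap_summable {g : V × V → ℝ} (h : Summable g) :
    Summable fun p : V × V => g p.swap :=
  ((Equiv.prodComm V V).summable_iff).mpr h

lemma tsum_swap (g : V × V → ℝ) : ∑' p : V × V, g p.swap = ∑' p, g p :=
  (Equiv.prodComm V V).tsum_eq g

variable (F : V → ℝ)

lemma summable_sq1 (hF : Summable fun v => G.deg v * (F v * F v)) :
    Summable fun p : V × V => G.m p.1 p.2 * (F p.1 * F p.1) := by
  have h0 : (0:V × V → ℝ) ≤ fun p : V × V => G.m p.1 p.2 * (F p.1 * F p.1) :=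
    fun p => mul_nonneg (G.nonneg _ _) (mul_self_nonneg _)
  have hmarg : Summable fun v => ∑' u, G.m v u * (F v * F v) := by
    refine hF.congr fun v => ?_
    rw [tsum_mul_right]
    rfl
  exact (summable_prod_of_nonneg h0).mpr ⟨fun v => (G.summable_left v).mul_right (F v * F v), hmarg⟩

lemma tsum_sq1 (hF : Summable fun v => G.deg v * (F v * F v)) :
    ∑' p : V × V, G.m p.1 p.2 * (F p.1 * F p.1) = ∑' v, G.deg v * (F v * F v) := by
  rw [Summable.tsum_prod (summable_sq1 G F hF)]
  refine tsum_congr fun v => ?_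
  rw [show (fun c => G.m (v, c).1 (v, c).2 * (F (v, c).1 * F (v, c).1))
      = fun c => G.m v c * (F v * F v) from rfl, tsum_mul_right]
  rfl

lemma summable_sq2 (hF : Summable fun v => G.deg v * (F v * F v)) :
    Summable fun p : V × V => G.m p.1 p.2 * (F p.2 * F p.2) := by
  have h := swap_summable (summable_sq1 G F hF)
  refine h.congr fun p => ?_
  simp only [Prod.snd_swap, Prod.fst_swap]
  rw [G.symm]

lemma tsum_sq2 (hF : Summable fun v => G.deg v * (F v * F v)) :
    ∑' p : V × V, G.m p.1 p.2 * (F p.2 * F p.2) = ∑' v, G.deg v * (F v * F v) := by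
  rw [← tsum_sq1 G F hF, ← tsum_swap (fun p => G.m p.1 p.2 * (F p.1 * F p.1))]
  refine tsum_congr fun p => ?_
  simp only [Prod.snd_swap, Prod.fst_swap]
  rw [G.symm]

lemma summable_T (hF : Summable fun v => G.deg v * (F v * F v)) :
    Summable fun p : V × V => G.m p.1 p.2 * (F p.1 * F p.2) := by
  have hb : Summable fun p : V × V =>
      G.m p.1 p.2 * (F p.1 * F p.1) / 2 + G.m p.1 p.2 * (F p.2 * F p.2) / 2 :=
    ((summable_sq1 G F hF).div_const 2).add ((summable_sq2 G F hF).div_const 2)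
  refine summable_abs_iff.mp (hb.of_nonneg_of_le (fun p => abs_nonneg _) fun p => ?_)
  rw [abs_mul, abs_of_nonneg (G.nonneg _ _)]
  have h := G.nonneg p.1 p.2
  have habs : |F p.1 * F p.2| ≤ (F p.1 * F p.1 + F p.2 * F p.2) / 2 := by
    rw [abs_mul]
    have e3 : 0 ≤ |F p.1| * |F p.1| - 2 * (|F p.1| * |F p.2|) + |F p.2| * |F p.2| := by
      nlinarith [mul_self_nonneg (|F p.1| - |F p.2|)]
    linarith [abs_mul_abs_self (F p.1), abs_mul_abs_self (F p.2), e3]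
  nlinarith [mul_le_mul_of_nonneg_left habs h]

lemma summable_T_marg (hF : Summable fun v => G.deg v * (F v * F v)) :
    Summable fun v => F v * ∑' u, G.m v u * F u := by
  have hT := summable_T G F hF
  have h : HasSum (fun v => ∑' u, G.m v u * (F v * F u)) (∑' p : V × V, G.m p.1 p.2 * (F p.1 * F p.2)) :=
    hT.hasSum.prod_fiberwise fun v => (hT.prod_factor v).hasSum
  refine h.summable.congr fun v => ?_
  rw [show (fun u => G.m v u * (F v * F u)) = fun u => F v * (G.m v u * F u) from
    funext fun u => by ring, tsum_mul_left]

lemma tsum_T (hF : Summable fun v => G.deg v * (F v * F v)) :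
    ∑' p : V × V, G.m p.1 p.2 * (F p.1 * F p.2) = ∑' v, F v * ∑' u, G.m v u * F u := by
  rw [Summable.tsum_prod (summable_T G F hF)]
  refine tsum_congr fun v => ?_
  rw [show (fun u => G.m (v, u).1 (v, u).2 * (F (v, u).1 * F (v, u).2))
      = fun u => F v * (G.m v u * F u) from funext fun u => by simp; ring, tsum_mul_left]

lemma summable_A (hF : Summable fun v => G.deg v * (F v * F v)) :
    Summable fun p : V × V => G.m p.1 p.2 * ((F p.1 - F p.2) ^ 2) := by
  have hb := ((summable_sq1 G F hF).add (summable_sq2 G F hF)).sub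
    ((summable_T G F hF).mul_left 2)
  refine hb.congr fun p => ?_
  ring

lemma summable_B (hF : Summable fun v => G.deg v * (F v * F v)) :
    Summable fun p : V × V => G.m p.1 p.2 * ((F p.1 + F p.2) ^ 2) := by
  have hb := ((summable_sq1 G F hF).add (summable_sq2 G F hF)).add
    ((summable_T G F hF).mul_left 2)
  refine hb.congr fun p => ?_
  ring

lemma tsum_A (hF : Summable fun v => G.deg v * (F v * F v)) :
    ∑' p : V × V, G.m p.1 p.2 * ((F p.1 - F p.2) ^ 2)
      = 2 * (∑' v, G.deg v * (F v * F v)) - 2 * ∑' p : V × V, G.m p.1 p.2 * (F p.1 * F p.2) := by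
  have h1 := summable_sq1 G F hF
  have h2 := summable_sq2 G F hF
  have hT := summable_T G F hF
  have e : ∀ p : V × V, G.m p.1 p.2 * ((F p.1 - F p.2) ^ 2)
      = (G.m p.1 p.2 * (F p.1 * F p.1) + G.m p.1 p.2 * (F p.2 * F p.2))
        - 2 * (G.m p.1 p.2 * (F p.1 * F p.2)) := fun p => by ring
  rw [tsum_congr e, Summable.tsum_sub (h1.add h2) (hT.mul_left 2), Summable.tsum_add h1 h2,
    tsum_sq1 G F hF, tsum_sq2 G F hF, tsum_mul_left]
  ring

lemma tsum_B (hF : Summable fun v => G.deg v * (F v * F v)) :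
    ∑' p : V × V, G.m p.1 p.2 * ((F p.1 + F p.2) ^ 2)
      = 2 * (∑' v, G.deg v * (F v * F v)) + 2 * ∑' p : V × V, G.m p.1 p.2 * (F p.1 * F p.2) := by
  have h1 := summable_sq1 G F hF
  have h2 := summable_sq2 G F hF
  have hT := summable_T G F hF
  have e : ∀ p : V × V, G.m p.1 p.2 * ((F p.1 + F p.2) ^ 2)
      = (G.m p.1 p.2 * (F p.1 * F p.1) + G.m p.1 p.2 * (F p.2 * F p.2))
        + 2 * (G.m p.1 p.2 * (F p.1 * F p.2)) := fun p => by ring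
  rw [tsum_congr e, Summable.tsum_add (h1.add h2) (hT.mul_left 2), Summable.tsum_add h1 h2,
    tsum_sq1 G F hF, tsum_sq2 G F hF, tsum_mul_left]
  ring

lemma summable_C (hF : Summable fun v => G.deg v * (F v * F v)) :
    Summable fun p : V × V => G.m p.1 p.2 * |F p.1 ^ 2 - F p.2 ^ 2| := by
  have hb := (summable_sq1 G F hF).add (summable_sq2 G F hF)
  refine hb.of_nonneg_of_le (fun p => mul_nonneg (G.nonneg _ _) (abs_nonneg _)) fun p => ?_
  have h := G.nonneg p.1 p.2
  have : |F p.1 ^ 2 - F p.2 ^ 2| ≤ F p.1 * F p.1 + F p.2 * F p.2 := by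
    rw [abs_le]
    constructor <;> nlinarith [sq_nonneg (F p.1), sq_nonneg (F p.2)]
  nlinarith [mul_le_mul_of_nonneg_left this h]

lemma summable_C' (hF : Summable fun v => G.deg v * (F v * F v)) :
    Summable fun p : V × V => G.m p.1 p.2 * max (F p.1 ^ 2 - F p.2 ^ 2) 0 := by
  refine (summable_C G F hF).of_nonneg_of_le
    (fun p => mul_nonneg (G.nonneg _ _) (le_max_right _ _)) fun p => ?_
  refine mul_le_mul_of_nonneg_left ?_ (G.nonneg _ _)
  rw [max_le_iff]
  exact ⟨le_abs_self _, abs_nonneg _⟩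

lemma tsum_C_eq_two_C' (hF : Summable fun v => G.deg v * (F v * F v)) :
    ∑' p : V × V, G.m p.1 p.2 * |F p.1 ^ 2 - F p.2 ^ 2|
      = 2 * ∑' p : V × V, G.m p.1 p.2 * max (F p.1 ^ 2 - F p.2 ^ 2) 0 := by
  have hC' := summable_C' G F hF
  have hswap : ∑' p : V × V, G.m p.1 p.2 * max (F p.1 ^ 2 - F p.2 ^ 2) 0
      = ∑' p : V × V, G.m p.1 p.2 * max (F p.2 ^ 2 - F p.1 ^ 2) 0 := by
    rw [← tsum_swap (fun p : V × V => G.m p.1 p.2 * max (F p.1 ^ 2 - F p.2 ^ 2) 0)]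
    refine tsum_congr fun p => ?_
    simp only [Prod.fst_swap, Prod.snd_swap]
    rw [G.symm]
  have hswap_summable : Summable fun p : V × V => G.m p.1 p.2 * max (F p.2 ^ 2 - F p.1 ^ 2) 0 := by
    have h := swap_summable hC'
    refine h.congr fun p => ?_
    simp only [Prod.fst_swap, Prod.snd_swap]
    rw [G.symm]
  have e : ∀ p : V × V, G.m p.1 p.2 * |F p.1 ^ 2 - F p.2 ^ 2|
      = G.m p.1 p.2 * max (F p.1 ^ 2 - F p.2 ^ 2) 0
        + G.m p.1 p.2 * max (F p.2 ^ 2 - F p.1 ^ 2) 0 := by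
    intro p
    rw [← mul_add]
    congr 1
    rcases le_total (F p.1 ^ 2) (F p.2 ^ 2) with h | h
    · rw [abs_of_nonpos (by linarith), max_eq_right (by linarith), max_eq_left (by linarith)]
      ring
    · rw [abs_of_nonneg (by linarith), max_eq_left (by linarith), max_eq_right (by linarith)]
      ring
  rw [tsum_congr e, Summable.tsum_add hC' hswap_summable, ← hswap]
  ring

lemma cauchy_schwarz (hF : Summable fun v => G.deg v * (F v * F v)) :
    (∑' p : V × V, G.m p.1 p.2 * |F p.1 ^ 2 - F p.2 ^ 2|) ^ 2
      ≤ (∑' p : V × V, G.m p.1 p.2 * ((F p.1 - F p.2) ^ 2))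
        * ∑' p : V × V, G.m p.1 p.2 * ((F p.1 + F p.2) ^ 2) := by
  set A := ∑' p : V × V, G.m p.1 p.2 * ((F p.1 - F p.2) ^ 2) with hA
  set B := ∑' p : V × V, G.m p.1 p.2 * ((F p.1 + F p.2) ^ 2) with hB
  have hA0 : 0 ≤ A := tsum_nonneg fun p => mul_nonneg (G.nonneg _ _) (sq_nonneg _)
  have hB0 : 0 ≤ B := tsum_nonneg fun p => mul_nonneg (G.nonneg _ _) (sq_nonneg _)
  have hCs := summable_C G F hF
  set x := fun p : V × V => Real.sqrt (G.m p.1 p.2) * |F p.1 - F p.2| with hx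
  set y := fun p : V × V => Real.sqrt (G.m p.1 p.2) * |F p.1 + F p.2| with hy
  have hxy : ∀ p, G.m p.1 p.2 * |F p.1 ^ 2 - F p.2 ^ 2| = x p * y p := by
    intro p
    have h1 : |F p.1 - F p.2| * |F p.1 + F p.2| = |F p.1 ^ 2 - F p.2 ^ 2| := by
      rw [← abs_mul]
      congr 1
      ring
    calc G.m p.1 p.2 * |F p.1 ^ 2 - F p.2 ^ 2|
        = (Real.sqrt (G.m p.1 p.2) * Real.sqrt (G.m p.1 p.2))
          * (|F p.1 - F p.2| * |F p.1 + F p.2|) := by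
          rw [Real.mul_self_sqrt (G.nonneg _ _), h1]
      _ = x p * y p := by rw [hx, hy]; ring
  have hx2 : ∀ p, x p ^ 2 = G.m p.1 p.2 * ((F p.1 - F p.2) ^ 2) := fun p => by
    rw [hx, mul_pow, Real.sq_sqrt (G.nonneg _ _), sq_abs]
  have hy2 : ∀ p, y p ^ 2 = G.m p.1 p.2 * ((F p.1 + F p.2) ^ 2) := fun p => by
    rw [hy, mul_pow, Real.sq_sqrt (G.nonneg _ _), sq_abs]
  have key : ∀ s : Finset (V × V),
      ∑ p ∈ s, G.m p.1 p.2 * |F p.1 ^ 2 - F p.2 ^ 2| ≤ Real.sqrt (A * B) := by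
    intro s
    have cs := Finset.sum_mul_sq_le_sq_mul_sq s x y
    have hxA : ∑ p ∈ s, x p ^ 2 ≤ A := by
      rw [Finset.sum_congr rfl fun p _ => hx2 p]
      exact (summable_A G F hF).sum_le_tsum s (fun p _ => mul_nonneg (G.nonneg _ _) (sq_nonneg _))
    have hyB : ∑ p ∈ s, y p ^ 2 ≤ B := by
      rw [Finset.sum_congr rfl fun p _ => hy2 p]
      exact (summable_B G F hF).sum_le_tsum s (fun p _ => mul_nonneg (G.nonneg _ _) (sq_nonneg _))
    have hsum0 : 0 ≤ ∑ p ∈ s, x p * y p :=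
      Finset.sum_nonneg fun p _ => mul_nonneg
        (mul_nonneg (Real.sqrt_nonneg _) (abs_nonneg _))
        (mul_nonneg (Real.sqrt_nonneg _) (abs_nonneg _))
    have hAB : (∑ p ∈ s, x p * y p) ^ 2 ≤ A * B := by
      refine le_trans cs ?_
      have h1 : (0:ℝ) ≤ ∑ p ∈ s, y p ^ 2 := Finset.sum_nonneg fun p _ => sq_nonneg _
      have h2 : (0:ℝ) ≤ ∑ p ∈ s, x p ^ 2 := Finset.sum_nonneg fun p _ => sq_nonneg _
      exact mul_le_mul hxA hyB h1 hA0
    rw [Finset.sum_congr rfl fun p _ => hxy p]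
    exact (Real.le_sqrt hsum0 (mul_nonneg hA0 hB0)).mpr hAB
  have hCle : ∑' p : V × V, G.m p.1 p.2 * |F p.1 ^ 2 - F p.2 ^ 2| ≤ Real.sqrt (A * B) :=
    Summable.tsum_le_of_sum_le hCs key
  have hC0 : 0 ≤ ∑' p : V × V, G.m p.1 p.2 * |F p.1 ^ 2 - F p.2 ^ 2| :=
    tsum_nonneg fun p => mul_nonneg (G.nonneg _ _) (abs_nonneg _)
  calc (∑' p : V × V, G.m p.1 p.2 * |F p.1 ^ 2 - F p.2 ^ 2|) ^ 2
      ≤ Real.sqrt (A * B) ^ 2 := pow_le_pow_left₀ hC0 hCle 2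
    _ = A * B := Real.sq_sqrt (mul_nonneg hA0 hB0)

lemma summable_setWeight (S : Set V) : Summable fun v : S => G.deg v :=
  G.summable_deg.subtype S

lemma setWeight_nonneg (S : Set V) : 0 ≤ G.setWeight S :=
  tsum_nonneg fun v => G.deg_nonneg v

lemma setWeight_pos {S : Set V} (hS : S.Nonempty) : 0 < G.setWeight S := by
  obtain ⟨v, hv⟩ := hS
  have h := Summable.le_tsum (G.summable_setWeight S) ⟨v, hv⟩ fun u _ => G.deg_nonneg u
  exact lt_of_lt_of_le (G.deg_pos v) h

lemma summable_boundary (S : Set V) : Summable fun p : ↥S × ↥Sᶜ => G.m p.1 p.2 := by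
  have hinj : Function.Injective (fun p : ↥S × ↥Sᶜ => ((p.1 : V), (p.2 : V))) := by
    rintro ⟨a, b⟩ ⟨c, d⟩ h
    rw [Prod.mk.injEq] at h
    exact Prod.ext (Subtype.ext h.1) (Subtype.ext h.2)
  exact G.summable.comp_injective hinj

lemma boundaryWeight_nonneg (S : Set V) : 0 ≤ G.boundaryWeight S :=
  tsum_nonneg fun p => G.nonneg _ _

lemma ofReal_setWeight (S : Set V) :
    ENNReal.ofReal (G.setWeight S)
      = ∑' v, S.indicator (fun v => ENNReal.ofReal (G.deg v)) v := by
  rw [setWeight, ENNReal.ofReal_tsum_of_nonneg (fun v : S => G.deg_nonneg v)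
    (G.summable_setWeight S)]
  exact tsum_subtype S fun v => ENNReal.ofReal (G.deg v)

lemma ofReal_boundaryWeight (S : Set V) :
    ENNReal.ofReal (G.boundaryWeight S)
      = ∑' p : V × V, (S ×ˢ Sᶜ).indicator (fun p => ENNReal.ofReal (G.m p.1 p.2)) p := by
  rw [boundaryWeight, ENNReal.ofReal_tsum_of_nonneg (fun p => G.nonneg _ _)
    (G.summable_boundary S)]
  rw [← (Equiv.Set.prod S Sᶜ).tsum_eq (fun p : ↥S × ↥Sᶜ => ENNReal.ofReal (G.m p.1 p.2))]
  rw [← tsum_subtype (S ×ˢ Sᶜ) (fun p : V × V => ENNReal.ofReal (G.m p.1 p.2))]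
  refine tsum_congr fun q => ?_
  congr 1 <;> simp [Equiv.Set.prod]

lemma vol_Ico_inter {a : ℝ} (b : ℝ) (ha : 0 ≤ a) :
    MeasureTheory.volume (Set.Ico a b ∩ Set.Ioi 0) = ENNReal.ofReal (b - a) := by
  rcases le_or_gt b a with h | h
  · rw [Set.Ico_eq_empty (not_lt.mpr h), Set.empty_inter, measure_empty,
      Eq.comm, ENNReal.ofReal_eq_zero]
    linarith
  · rcases eq_or_lt_of_le ha with h0 | h0
    · have he : Set.Ico a b ∩ Set.Ioi 0 = Set.Ioo 0 b := by
        ext t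
        simp only [Set.mem_inter_iff, Set.mem_Ico, Set.mem_Ioi, Set.mem_Ioo, ← h0]
        constructor
        · rintro ⟨⟨_, h2⟩, h3⟩; exact ⟨h3, h2⟩
        · rintro ⟨h1, h2⟩; exact ⟨⟨le_of_lt h1, h2⟩, h1⟩
      rw [he, Real.volume_Ioo, ← h0, sub_zero]
    · have he : Set.Ico a b ∩ Set.Ioi 0 = Set.Ico a b :=
        Set.inter_eq_left.mpr fun t ht => lt_of_lt_of_le h0 ht.1
      rw [he, Real.volume_Ico]

variable [Countable V]

lemma coarea_set (hF : Summable fun v => G.deg v * (F v * F v)) :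
    ∫⁻ t in Set.Ioi (0:ℝ), ENNReal.ofReal (G.setWeight {v | t < F v ^ 2})
      = ENNReal.ofReal (∑' v, G.deg v * (F v * F v)) := by
  calc ∫⁻ t in Set.Ioi (0:ℝ), ENNReal.ofReal (G.setWeight {v | t < F v ^ 2})
      = ∫⁻ t in Set.Ioi (0:ℝ),
          ∑' v, (Set.Iio (F v ^ 2)).indicator (fun _ => ENNReal.ofReal (G.deg v)) t := by
        refine lintegral_congr fun t => ?_
        rw [G.ofReal_setWeight]
        refine tsum_congr fun v => ?_
        by_cases hv : t < F v ^ 2 <;> simp [Set.indicator, hv]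
    _ = ∑' v, ∫⁻ t in Set.Ioi (0:ℝ),
          (Set.Iio (F v ^ 2)).indicator (fun _ => ENNReal.ofReal (G.deg v)) t :=
        lintegral_tsum fun v => (measurable_const.indicator measurableSet_Iio).aemeasurable
    _ = ∑' v, ENNReal.ofReal (G.deg v * (F v * F v)) := by
        refine tsum_congr fun v => ?_
        rw [lintegral_indicator measurableSet_Iio, setLIntegral_const,
          Measure.restrict_apply measurableSet_Iio]
        have he : Set.Iio (F v ^ 2) ∩ Set.Ioi 0 = Set.Ico 0 (F v ^ 2) ∩ Set.Ioi 0 := by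
          ext t
          simp only [Set.mem_inter_iff, Set.mem_Iio, Set.mem_Ioi, Set.mem_Ico]
          constructor
          · rintro ⟨h1, h2⟩; exact ⟨⟨le_of_lt h2, h1⟩, h2⟩
          · rintro ⟨⟨_, h2⟩, h3⟩; exact ⟨h2, h3⟩
        rw [he, vol_Ico_inter _ le_rfl, sub_zero, ← ENNReal.ofReal_mul (G.deg_nonneg v)]
        congr 1
        ring
    _ = ENNReal.ofReal (∑' v, G.deg v * (F v * F v)) :=
        (ENNReal.ofReal_tsum_of_nonneg
          (fun v => mul_nonneg (G.deg_nonneg v) (mul_self_nonneg _)) hF).symm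

lemma coarea_boundary (hF : Summable fun v => G.deg v * (F v * F v)) :
    ∫⁻ t in Set.Ioi (0:ℝ), ENNReal.ofReal (G.boundaryWeight {v | t < F v ^ 2})
      = ENNReal.ofReal (∑' p : V × V, G.m p.1 p.2 * max (F p.1 ^ 2 - F p.2 ^ 2) 0) := by
  calc ∫⁻ t in Set.Ioi (0:ℝ), ENNReal.ofReal (G.boundaryWeight {v | t < F v ^ 2})
      = ∫⁻ t in Set.Ioi (0:ℝ), ∑' p : V × V,
          (Set.Ico (F p.2 ^ 2) (F p.1 ^ 2)).indicator
            (fun _ => ENNReal.ofReal (G.m p.1 p.2)) t := by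
        refine lintegral_congr fun t => ?_
        rw [G.ofReal_boundaryWeight]
        refine tsum_congr fun p => ?_
        have hmem : p ∈ ({v | t < F v ^ 2} : Set V) ×ˢ ({v | t < F v ^ 2} : Set V)ᶜ
            ↔ t ∈ Set.Ico (F p.2 ^ 2) (F p.1 ^ 2) := by
          simp only [Set.mem_prod, Set.mem_compl_iff, Set.mem_setOf_eq, Set.mem_Ico, not_lt]
          exact and_comm
        by_cases h : t ∈ Set.Ico (F p.2 ^ 2) (F p.1 ^ 2)
        · rw [Set.indicator_of_mem (hmem.mpr h), Set.indicator_of_mem h]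
        · rw [Set.indicator_of_notMem (fun hc => h (hmem.mp hc)), Set.indicator_of_notMem h]
    _ = ∑' p : V × V, ∫⁻ t in Set.Ioi (0:ℝ),
          (Set.Ico (F p.2 ^ 2) (F p.1 ^ 2)).indicator
            (fun _ => ENNReal.ofReal (G.m p.1 p.2)) t :=
        lintegral_tsum fun p => (measurable_const.indicator measurableSet_Ico).aemeasurable
    _ = ∑' p : V × V, ENNReal.ofReal (G.m p.1 p.2 * max (F p.1 ^ 2 - F p.2 ^ 2) 0) := by
        refine tsum_congr fun p => ?_
        rw [lintegral_indicator measurableSet_Ico, setLIntegral_const,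
          Measure.restrict_apply measurableSet_Ico, vol_Ico_inter _ (sq_nonneg _)]
        rcases le_total (F p.1 ^ 2 - F p.2 ^ 2) 0 with h | h
        · rw [ENNReal.ofReal_eq_zero.mpr h, mul_zero, Eq.comm, ENNReal.ofReal_eq_zero,
            max_eq_right h, mul_zero]
        · rw [max_eq_left h, ← ENNReal.ofReal_mul (G.nonneg _ _)]
    _ = ENNReal.ofReal (∑' p : V × V, G.m p.1 p.2 * max (F p.1 ^ 2 - F p.2 ^ 2) 0) :=
        (ENNReal.ofReal_tsum_of_nonneg
          (fun p => mul_nonneg (G.nonneg _ _) (le_max_right _ _))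
          (summable_C' G F hF)).symm


variable [MeasurableSpace V] [MeasurableSingletonClass V] [Countable V]

lemma lintegral_eq (g : V → ℝ≥0∞) :
    ∫⁻ v, g v ∂G.measure = ∑' v, ENNReal.ofReal (G.deg v) * g v := by
  rw [measure, lintegral_sum_measure]
  refine tsum_congr fun v => ?_
  rw [lintegral_smul_measure, lintegral_dirac, smul_eq_mul]

lemma measure_singleton (v : V) : G.measure {v} = ENNReal.ofReal (G.deg v) := by
  classical
  rw [measure, Measure.sum_apply _ (measurableSet_singleton v)]
  have h : ∀ u, (ENNReal.ofReal (G.deg u) • Measure.dirac u) ({v} : Set V)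
      = if u = v then ENNReal.ofReal (G.deg v) else 0 := by
    intro u
    rw [Measure.smul_apply, Measure.dirac_apply, smul_eq_mul]
    by_cases h : u = v <;> simp [h]
  simp only [h]
  exact tsum_ite_eq v _

lemma ae_all {P : V → Prop} (h : ∀ᵐ v ∂G.measure, P v) : ∀ v, P v := by
  intro v
  by_contra hv
  have h1 : G.measure {u | ¬ P u} = 0 := h
  have h2 : G.measure {v} ≤ G.measure {u | ¬ P u} := measure_mono (by simpa using hv)
  rw [measure_singleton, h1] at h2
  simp only [nonpos_iff_eq_zero, ENNReal.ofReal_eq_zero] at h2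
  exact absurd h2 (not_le.mpr (G.deg_pos v))

lemma summable_of_integrable {g : V → ℝ} (hg : Integrable g G.measure) :
    Summable fun v => G.deg v * g v := by
  have h := hg.2
  rw [HasFiniteIntegral, lintegral_eq] at h
  have h2 : Summable fun v => (ENNReal.ofReal (G.deg v) * ‖g v‖₊).toReal :=
    ENNReal.summable_toReal h.ne
  have h3 : Summable fun v => G.deg v * |g v| := by
    refine h2.congr fun v => ?_
    rw [ENNReal.toReal_mul, ENNReal.toReal_ofReal (G.deg_nonneg v)]
    simp [Real.norm_eq_abs]
  refine summable_abs_iff.mp (h3.congr fun v => ?_)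
  rw [abs_mul, abs_of_nonneg (G.deg_nonneg v)]

lemma integral_eq_tsum {g : V → ℝ} (hg : Integrable g G.measure) :
    ∫ v, g v ∂G.measure = ∑' v, G.deg v * g v := by
  have h := integral_sum_measure (μ := fun v => ENNReal.ofReal (G.deg v) • Measure.dirac v)
    (f := g) hg
  rw [measure, h]
  refine tsum_congr fun v => ?_
  rw [integral_smul_measure, integral_dirac, ENNReal.toReal_ofReal (G.deg_nonneg v),
    smul_eq_mul]

open scoped RealInnerProductSpace in
lemma inner_eq_tsum (f g : Lp ℝ 2 G.measure) :
    ⟪f, g⟫ = ∑' v, G.deg v * (f v * g v) := by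
  rw [L2.inner_def]
  have hint : Integrable (fun v => (f v) * (g v)) G.measure := by
    have := L2.integrable_inner (𝕜 := ℝ) f g
    simpa [RCLike.inner_apply, mul_comm] using this
  rw [show ∫ a, ⟪f a, g a⟫ ∂G.measure = ∫ a, f a * g a ∂G.measure from by
    simp [RCLike.inner_apply, mul_comm]]
  exact G.integral_eq_tsum hint


end SummableWeightedGraph

open SummableWeightedGraph in
open scoped RealInnerProductSpace in
/-- for nonzero `f`, the Rayleigh quotient satisfies
`1 - √(1 - h(f)²) ≤ ⟨Δf,f⟩/⟨f,f⟩ ≤ 1 + √(1 - h(f)²)`. -/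
theorem rayleigh_quotient_bounds {V : Type*} [MeasurableSpace V] [MeasurableSingletonClass V]
    [Countable V] [Nonempty V] (G : SummableWeightedGraph V)
    (Δ : Lp ℝ 2 G.measure →L[ℝ] Lp ℝ 2 G.measure) (hΔ : G.IsLaplacian Δ)
    (f : Lp ℝ 2 G.measure) (hf : f ≠ 0) (hc : ℝ)
    (hhc : hc = sInf { r : ℝ | ∃ S : Set V, S.Nonempty ∧ S ⊆ {v : V | f v ≠ 0} ∧
      r = G.boundaryWeight S / G.setWeight S }) :
    1 - Real.sqrt (1 - hc ^ 2) ≤ ⟪Δ f, f⟫ / ⟪f, f⟫ ∧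
    ⟪Δ f, f⟫ / ⟪f, f⟫ ≤ 1 + Real.sqrt (1 - hc ^ 2) := by
  classical
  set F : V → ℝ := ⇑f with hFdef
  have hint : Integrable (fun v => F v * F v) G.measure := by
    have := L2.integrable_inner (𝕜 := ℝ) f f
    simpa [RCLike.inner_apply, ← sq, hFdef] using this
  have hF : Summable fun v => G.deg v * (F v * F v) := G.summable_of_integrable hint
  set N := ∑' v, G.deg v * (F v * F v) with hNdef
  set T := ∑' p : V × V, G.m p.1 p.2 * (F p.1 * F p.2) with hTdef
  have hNpos : 0 < N := by
    have hex : ∃ v, F v ≠ 0 := by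
      by_contra hno
      push_neg at hno
      exact hf ((Lp.eq_zero_iff_ae_eq_zero (f := f)).mpr (ae_of_all _ hno))
    obtain ⟨v, hv⟩ := hex
    have h1 : G.deg v * (F v * F v) ≤ N :=
      Summable.le_tsum hF v fun u _ => mul_nonneg (G.deg_nonneg u) (mul_self_nonneg _)
    have h2 : 0 < G.deg v * (F v * F v) :=
      mul_pos (G.deg_pos v) (mul_self_pos.mpr hv)
    linarith
  have hinner : ⟪f, f⟫ = N := G.inner_eq_tsum f f
  have hL : ∀ v, (Δ f) v = F v - (G.deg v)⁻¹ * ∑' u, G.m v u * F u := G.ae_all (hΔ f)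
  have hinnerD : ⟪Δ f, f⟫ = N - T := by
    rw [G.inner_eq_tsum (Δ f) f]
    have he : ∀ v, G.deg v * ((Δ f) v * F v)
        = G.deg v * (F v * F v) - F v * ∑' u, G.m v u * F u := by
      intro v
      rw [hL v]
      have hd := (G.deg_pos v).ne'
      field_simp
    rw [tsum_congr he, Summable.tsum_sub hF (summable_T_marg G F hF), ← hNdef, ← tsum_T G F hF, ← hTdef]
  have hbdd : BddBelow { r : ℝ | ∃ S : Set V, S.Nonempty ∧ S ⊆ {v : V | F v ≠ 0} ∧
      r = G.boundaryWeight S / G.setWeight S } := by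
    refine ⟨0, ?_⟩
    rintro r ⟨S, hS, hSsub, rfl⟩
    exact div_nonneg (G.boundaryWeight_nonneg S) (G.setWeight_nonneg S)
  have hc0 : 0 ≤ hc := by
    rw [hhc]
    apply Real.sInf_nonneg
    rintro r ⟨S, hS, hSsub, rfl⟩
    exact div_nonneg (G.boundaryWeight_nonneg S) (G.setWeight_nonneg S)
  set C' := ∑' p : V × V, G.m p.1 p.2 * max (F p.1 ^ 2 - F p.2 ^ 2) 0 with hC'def
  have hC'0 : 0 ≤ C' :=
    tsum_nonneg fun p => mul_nonneg (G.nonneg _ _) (le_max_right _ _)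
  have hkey : hc * N ≤ C' := by
    have hmono : ∀ t ∈ Set.Ioi (0:ℝ),
        ENNReal.ofReal (hc * G.setWeight {v | t < F v ^ 2})
          ≤ ENNReal.ofReal (G.boundaryWeight {v | t < F v ^ 2}) := by
      intro t ht
      apply ENNReal.ofReal_le_ofReal
      rcases Set.eq_empty_or_nonempty {v | t < F v ^ 2} with hS | hS
      · rw [hS]
        have h0 : G.setWeight ∅ = 0 := by
          rw [setWeight]
          exact tsum_empty
        rw [h0, mul_zero]
        exact G.boundaryWeight_nonneg ∅
      · have hsub : {v | t < F v ^ 2} ⊆ {v : V | F v ≠ 0} := by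
          intro v hv h0
          simp only [Set.mem_setOf_eq] at hv
          rw [h0] at hv
          have ht' : (0:ℝ) < t := ht
          nlinarith
        have hmem : G.boundaryWeight {v | t < F v ^ 2} / G.setWeight {v | t < F v ^ 2}
            ∈ { r : ℝ | ∃ S : Set V, S.Nonempty ∧ S ⊆ {v : V | F v ≠ 0} ∧
              r = G.boundaryWeight S / G.setWeight S } := ⟨_, hS, hsub, rfl⟩
        have hle : hc ≤ G.boundaryWeight {v | t < F v ^ 2} / G.setWeight {v | t < F v ^ 2} := by
          rw [hhc]
          exact csInf_le hbdd hmem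
        have hpos := G.setWeight_pos hS
        calc hc * G.setWeight {v | t < F v ^ 2}
            ≤ (G.boundaryWeight {v | t < F v ^ 2} / G.setWeight {v | t < F v ^ 2})
              * G.setWeight {v | t < F v ^ 2} := mul_le_mul_of_nonneg_right hle hpos.le
          _ = G.boundaryWeight {v | t < F v ^ 2} := div_mul_cancel₀ _ hpos.ne'
    have h1 : ENNReal.ofReal (hc * N) ≤ ENNReal.ofReal C' := by
      calc ENNReal.ofReal (hc * N) = ENNReal.ofReal hc * ENNReal.ofReal N :=
            ENNReal.ofReal_mul hc0
        _ = ENNReal.ofReal hc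
            * ∫⁻ t in Set.Ioi (0:ℝ), ENNReal.ofReal (G.setWeight {v | t < F v ^ 2}) := by
            rw [coarea_set G F hF]
        _ = ∫⁻ t in Set.Ioi (0:ℝ),
            ENNReal.ofReal hc * ENNReal.ofReal (G.setWeight {v | t < F v ^ 2}) :=
            (lintegral_const_mul' _ _ ENNReal.ofReal_ne_top).symm
        _ = ∫⁻ t in Set.Ioi (0:ℝ),
            ENNReal.ofReal (hc * G.setWeight {v | t < F v ^ 2}) :=
            lintegral_congr fun t => (ENNReal.ofReal_mul hc0).symm
        _ ≤ ∫⁻ t in Set.Ioi (0:ℝ),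
            ENNReal.ofReal (G.boundaryWeight {v | t < F v ^ 2}) := by
            refine lintegral_mono_ae ?_
            rw [ae_restrict_iff' measurableSet_Ioi]
            exact ae_of_all _ hmono
        _ = ENNReal.ofReal C' := coarea_boundary G F hF
    exact (ENNReal.ofReal_le_ofReal_iff hC'0).mp h1
  have hCS := cauchy_schwarz G F hF
  have hC2 := tsum_C_eq_two_C' G F hF
  have hAval := tsum_A G F hF
  have hBval := tsum_B G F hF
  have h2 : (2 * (hc * N)) ^ 2 ≤ (2 * N - 2 * T) * (2 * N + 2 * T) := by
    calc (2 * (hc * N)) ^ 2 ≤ (2 * C') ^ 2 := by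
          have : 0 ≤ 2 * (hc * N) := by positivity
          apply pow_le_pow_left₀ this (by linarith)
      _ = (∑' p : V × V, G.m p.1 p.2 * |F p.1 ^ 2 - F p.2 ^ 2|) ^ 2 := by
          rw [hC2, ← hC'def]
      _ ≤ (∑' p : V × V, G.m p.1 p.2 * ((F p.1 - F p.2) ^ 2))
          * ∑' p : V × V, G.m p.1 p.2 * ((F p.1 + F p.2) ^ 2) := hCS
      _ = (2 * N - 2 * T) * (2 * N + 2 * T) := by rw [hAval, hBval, ← hNdef, ← hTdef]
  have hTsq : T ^ 2 ≤ (1 - hc ^ 2) * N ^ 2 := by nlinarith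
  have h1mhc : 0 ≤ 1 - hc ^ 2 := by nlinarith [sq_nonneg T, mul_pos hNpos hNpos]
  have habs : |T| ≤ Real.sqrt (1 - hc ^ 2) * N := by
    have h := Real.sqrt_le_sqrt hTsq
    rw [Real.sqrt_sq_eq_abs, Real.sqrt_mul h1mhc, Real.sqrt_sq hNpos.le] at h
    exact h
  have hTb := abs_le.mp habs
  have hs0 : 0 ≤ Real.sqrt (1 - hc ^ 2) := Real.sqrt_nonneg _
  rw [hinnerD, hinner]
  constructor
  · rw [le_div_iff₀ hNpos]
    nlinarith [hTb.2]
  · rw [div_le_iff₀ hNpos]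
    nlinarith [hTb.1]
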